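/- For every positive integer k, (1/k) · Σ_{j=1}^{k} (log j) · c_k(j) = Λ(k) + Σ_{d | k} (μ(d)/d) · log(d!), where Λ is the von Mangoldt function and μ is the Möbius function. -/

import Mathlib

open Finset ArithmeticFunction
open scoped ArithmeticFunction.Moebius

/-- The Ramanujan sum `c_k(j) = ∑_{1 ≤ m ≤ k, gcd(m,k)=1} exp(2πimj/k)`. -/
noncomputable def ramanujanSum (k : ℕ) (j : ℤ) : ℂ :=
  ∑ m ∈ (Finset.Icc 1 k).filter (fun m => Nat.gcd m k = 1),
    Complex.exp (2 * (Real.pi : ℂ) * Complex.I * (m : ℂ) * (j : ℂ) / (k : ℂ))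

lemma sum_mu_divisors (n : ℕ) :
    (∑ d ∈ n.divisors, μ d) = if n = 1 then 1 else 0 := by
  have h := congrArg (fun f : ArithmeticFunction ℤ => f n) moebius_mul_coe_zeta
  simp only [coe_mul_zeta_apply, one_apply] at h
  exact h

lemma log_factorial (n : ℕ) :
    Real.log (Nat.factorial n) = ∑ t ∈ Finset.Icc 1 n, Real.log t := by
  induction n with
  | zero => simp
  | succ n ih =>
    rw [Finset.sum_Icc_succ_top (Nat.le_add_left 1 n), ← ih, Nat.factorial_succ]
    push_cast
    rw [Real.log_mul (by positivity) (by exact_mod_cast (Nat.factorial_pos n).ne')]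
    ring

lemma geom_sum_exp (n : ℕ) (hn : 0 < n) (j : ℤ) :
    ∑ t ∈ Finset.Icc 1 n, Complex.exp (2 * (Real.pi : ℂ) * Complex.I * (t : ℂ) * (j : ℂ) / (n : ℂ))
      = if (n : ℤ) ∣ j then (n : ℂ) else 0 := by
  have hn0 : (n : ℂ) ≠ 0 := Nat.cast_ne_zero.mpr hn.ne'
  have h2 : (2 * (Real.pi : ℂ) * Complex.I) ≠ 0 := by
    simp [Real.pi_ne_zero, Complex.I_ne_zero]
  set z : ℂ := Complex.exp (2 * (Real.pi : ℂ) * Complex.I * (j : ℂ) / (n : ℂ)) with hz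
  have hzt : ∀ t : ℕ, Complex.exp (2 * (Real.pi : ℂ) * Complex.I * (t : ℂ) * (j : ℂ) / (n : ℂ)) = z ^ t := by
    intro t
    rw [hz, ← Complex.exp_nat_mul]
    ring_nf
  have hzn : z ^ n = 1 := by
    rw [hz, ← Complex.exp_nat_mul]
    have e : (n : ℂ) * (2 * (Real.pi : ℂ) * Complex.I * (j : ℂ) / (n : ℂ))
        = (j : ℂ) * (2 * (Real.pi : ℂ) * Complex.I) := by
      field_simp
    rw [e]
    exact_mod_cast Complex.exp_int_mul_two_pi_mul_I j
  rw [Finset.sum_congr rfl (fun t _ => hzt t)]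
  by_cases hd : (n : ℤ) ∣ j
  · obtain ⟨m, rfl⟩ := hd
    have hz1 : z = 1 := by
      rw [hz]
      have e : 2 * (Real.pi : ℂ) * Complex.I * (((n : ℤ) * m : ℤ) : ℂ) / (n : ℂ)
          = (m : ℂ) * (2 * (Real.pi : ℂ) * Complex.I) := by
        push_cast; field_simp
      rw [e]
      exact_mod_cast Complex.exp_int_mul_two_pi_mul_I m
    simp [hz1, Dvd.intro m rfl]
  · have hz1 : z ≠ 1 := by
      intro h
      apply hd
      rw [hz, Complex.exp_eq_one_iff] at h
      obtain ⟨m, hm⟩ := h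
      have hc : (j : ℂ) = ((m * n : ℤ) : ℂ) := by
        push_cast
        field_simp at hm
        apply mul_left_cancel₀ h2
        rw [hm]; ring
      have : j = m * n := by exact_mod_cast hc
      exact ⟨m, by linarith⟩
    have hsum : ∑ t ∈ Finset.Icc 1 n, z ^ t = z * ∑ t ∈ Finset.range n, z ^ t := by
      have : Finset.Icc 1 n = Finset.Ico 1 (n+1) := by rw [Finset.Ico_add_one_right_eq_Icc]
      rw [this, Finset.sum_Ico_eq_sum_range]
      rw [Finset.mul_sum]
      simp only [Nat.add_sub_cancel]
      exact Finset.sum_congr rfl fun x _ => by rw [pow_add, pow_one]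
    rw [hsum, geom_sum_eq hz1, hzn]
    simp [hd]

lemma ramanujanSum_eq (k : ℕ) (hk : 0 < k) (j : ℤ) :
    ramanujanSum k j =
      ∑ e ∈ k.divisors, (if (e : ℤ) ∣ j then (e : ℂ) * ((μ (k / e) : ℤ) : ℂ) else 0) := by
  unfold ramanujanSum
  rw [Finset.sum_filter]
  have h1 : ∀ m ∈ Finset.Icc 1 k,
      (if Nat.gcd m k = 1 then
          Complex.exp (2 * (Real.pi : ℂ) * Complex.I * (m : ℂ) * (j : ℂ) / (k : ℂ)) else 0)
        = ∑ d ∈ k.divisors, (if d ∣ m then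
            ((μ d : ℤ) : ℂ) * Complex.exp (2 * (Real.pi : ℂ) * Complex.I * (m : ℂ) * (j : ℂ) / (k : ℂ)) else 0) := by
    intro m hm
    have hfilt : k.divisors.filter (fun d => d ∣ m) = (Nat.gcd m k).divisors := by
      ext d
      simp only [Finset.mem_filter, Nat.mem_divisors, Nat.dvd_gcd_iff]
      constructor
      · rintro ⟨⟨h1, h2⟩, h3⟩
        exact ⟨⟨h3, h1⟩, Nat.gcd_ne_zero_right hk.ne'⟩
      · rintro ⟨⟨h1, h2⟩, h3⟩
        exact ⟨⟨h2, hk.ne'⟩, h1⟩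
    have key : (∑ d ∈ k.divisors, (if d ∣ m then ((μ d : ℤ) : ℂ) else 0))
        = if Nat.gcd m k = 1 then 1 else 0 := by
      rw [← Finset.sum_filter, hfilt]
      have h := sum_mu_divisors (Nat.gcd m k)
      calc (∑ d ∈ (Nat.gcd m k).divisors, ((μ d : ℤ) : ℂ))
          = ((∑ d ∈ (Nat.gcd m k).divisors, μ d : ℤ) : ℂ) := by push_cast; rfl
        _ = _ := by rw [h]; split <;> simp
    calc (if Nat.gcd m k = 1 then
          Complex.exp (2 * (Real.pi : ℂ) * Complex.I * (m : ℂ) * (j : ℂ) / (k : ℂ)) else 0)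
        = (if Nat.gcd m k = 1 then (1:ℂ) else 0) *
            Complex.exp (2 * (Real.pi : ℂ) * Complex.I * (m : ℂ) * (j : ℂ) / (k : ℂ)) := by
          split <;> simp
      _ = _ := by
          rw [← key, Finset.sum_mul]
          exact Finset.sum_congr rfl fun d _ => by split <;> simp
  rw [Finset.sum_congr rfl h1, Finset.sum_comm]
  trans ∑ d ∈ k.divisors, (if ((k / d : ℕ) : ℤ) ∣ j then ((k / d : ℕ) : ℂ) * ((μ d : ℤ) : ℂ) else 0)
  swap
  · have hre : ∀ d ∈ k.divisors,
        (if ((k / d : ℕ) : ℤ) ∣ j then ((k / d : ℕ) : ℂ) * ((μ d : ℤ) : ℂ) else 0)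
          = (fun (e : ℕ) => if (e : ℤ) ∣ j then (e : ℂ) * ((μ (k / e) : ℤ) : ℂ) else 0) (k / d) := by
      intro d hd
      simp only
      rw [Nat.div_div_self (Nat.mem_divisors.mp hd).1 hk.ne']
    rw [Finset.sum_congr rfl hre]
    exact Nat.sum_div_divisors k (fun (e : ℕ) => if (e : ℤ) ∣ j then (e : ℂ) * ((μ (k / e) : ℤ) : ℂ) else 0)
  refine Finset.sum_congr rfl fun d hd => ?_
  obtain ⟨hdk, -⟩ := Nat.mem_divisors.mp hd
  have hd0 : 0 < d := Nat.pos_of_mem_divisors hd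
  have hq0 : 0 < k / d := Nat.div_pos (Nat.le_of_dvd hk hdk) hd0
  have hmul : d * (k / d) = k := Nat.mul_div_cancel' hdk
  -- inner sum over multiples of d
  rw [← Finset.sum_filter]
  have hbij : ∑ m ∈ (Finset.Icc 1 k).filter (fun m => d ∣ m),
        ((μ d : ℤ) : ℂ) * Complex.exp (2 * (Real.pi : ℂ) * Complex.I * (m : ℂ) * (j : ℂ) / (k : ℂ))
      = ∑ t ∈ Finset.Icc 1 (k / d),
        ((μ d : ℤ) : ℂ) * Complex.exp (2 * (Real.pi : ℂ) * Complex.I * ((d * t : ℕ) : ℂ) * (j : ℂ) / (k : ℂ)) := by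
    refine Finset.sum_nbij' (fun m => m / d) (fun t => d * t) ?_ ?_ ?_ ?_ ?_
    · intro m hm
      simp only [Finset.mem_filter, Finset.mem_Icc] at hm
      obtain ⟨⟨h1, h2⟩, h3⟩ := hm
      simp only [Finset.mem_Icc]
      exact ⟨(Nat.one_le_div_iff hd0).mpr (Nat.le_of_dvd h1 h3), Nat.div_le_div_right h2⟩
    · intro t ht
      simp only [Finset.mem_Icc] at ht
      simp only [Finset.mem_filter, Finset.mem_Icc]
      refine ⟨⟨Nat.mul_pos hd0 ht.1, ?_⟩, Dvd.intro t rfl⟩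
      calc d * t ≤ d * (k / d) := Nat.mul_le_mul_left d ht.2
        _ = k := hmul
    · intro m hm
      simp only [Finset.mem_filter] at hm
      exact Nat.mul_div_cancel' hm.2
    · intro t ht
      exact Nat.mul_div_cancel_left t hd0
    · intro m hm
      simp only [Finset.mem_filter] at hm
      rw [Nat.mul_div_cancel' hm.2]
  rw [hbij]
  have harg : ∀ t : ℕ,
      Complex.exp (2 * (Real.pi : ℂ) * Complex.I * ((d * t : ℕ) : ℂ) * (j : ℂ) / (k : ℂ))
        = Complex.exp (2 * (Real.pi : ℂ) * Complex.I * (t : ℂ) * (j : ℂ) / ((k / d : ℕ) : ℂ)) := by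
    intro t
    congr 1
    have hk' : (k : ℂ) = (d : ℂ) * ((k / d : ℕ) : ℂ) := by exact_mod_cast hmul.symm
    have hd0' : (d : ℂ) ≠ 0 := Nat.cast_ne_zero.mpr hd0.ne'
    have hq0' : ((k / d : ℕ) : ℂ) ≠ 0 := Nat.cast_ne_zero.mpr hq0.ne'
    rw [hk']
    push_cast
    field_simp
  simp_rw [harg]
  rw [← Finset.mul_sum, geom_sum_exp (k / d) hq0 j]
  split <;> simp [mul_comm]

lemma sum_mu_log (k : ℕ) (hk : 0 < k) :
    ∑ e ∈ k.divisors, ((μ (k / e) : ℤ) : ℝ) * Real.log e = Λ k := by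
  have h1 : ∀ e ∈ k.divisors, ((μ (k / e) : ℤ) : ℝ) * Real.log e
      = (fun d => ((μ d : ℤ) : ℝ) * Real.log ((k / d : ℕ))) (k / e) := by
    intro e he
    simp only
    rw [Nat.div_div_self (Nat.mem_divisors.mp he).1 hk.ne']
  rw [Finset.sum_congr rfl h1,
    Nat.sum_div_divisors k (fun d => ((μ d : ℤ) : ℝ) * Real.log ((k / d : ℕ)))]
  have h2 : ∀ d ∈ k.divisors, ((μ d : ℤ) : ℝ) * Real.log ((k / d : ℕ))
      = ((μ d : ℤ) : ℝ) * Real.log k - ((μ d : ℤ) : ℝ) * Real.log d := by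
    intro d hd
    obtain ⟨hdvd, -⟩ := Nat.mem_divisors.mp hd
    have hd0 : (0 : ℝ) < d := by exact_mod_cast Nat.pos_of_mem_divisors hd
    have hk0 : (0 : ℝ) < k := by exact_mod_cast hk
    rw [Nat.cast_div hdvd (by exact_mod_cast hd0.ne'), Real.log_div hk0.ne' hd0.ne']
    ring
  rw [Finset.sum_congr rfl h2, Finset.sum_sub_distrib, ← Finset.sum_mul]
  have h5 := sum_moebius_mul_log_eq (n := k)
  simp only [ArithmeticFunction.log_apply] at h5
  have h3 : (∑ d ∈ k.divisors, ((μ d : ℤ) : ℝ)) * Real.log k = 0 := by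
    rcases eq_or_ne k 1 with rfl | hne
    · simp
    · have h4 : (∑ d ∈ k.divisors, (μ d : ℤ)) = 0 := by rw [sum_mu_divisors, if_neg hne]
      have : (∑ d ∈ k.divisors, ((μ d : ℤ) : ℝ)) = 0 := by exact_mod_cast h4
      rw [this, zero_mul]
  rw [h3, h5]
  ring

lemma sum_log_mul (e n : ℕ) (he : 0 < e) :
    ∑ t ∈ Finset.Icc 1 n, Real.log ((e * t : ℕ)) = n * Real.log e + Real.log (Nat.factorial n) := by
  have h : ∀ t ∈ Finset.Icc 1 n, Real.log ((e * t : ℕ)) = Real.log e + Real.log t := by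
    intro t ht
    have ht1 : 0 < t := (Finset.mem_Icc.mp ht).1
    push_cast
    rw [Real.log_mul (by positivity) (by positivity)]
  rw [Finset.sum_congr rfl h, Finset.sum_add_distrib, Finset.sum_const, Nat.card_Icc,
    log_factorial]
  simp [nsmul_eq_mul]

theorem log_weighted_average_ramanujan_sum (k : ℕ) (hk : 0 < k) :
    (1 / (k : ℂ)) * ∑ j ∈ Finset.Icc 1 k, (Real.log j : ℂ) * ramanujanSum k j =
      (ArithmeticFunction.vonMangoldt k : ℂ) +
        ∑ d ∈ k.divisors, ((moebius d : ℂ) / (d : ℂ)) * (Real.log (Nat.factorial d) : ℂ) := by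
  have hstep1 : ∑ j ∈ Finset.Icc 1 k, (Real.log j : ℂ) * ramanujanSum k j
      = ∑ e ∈ k.divisors, ((e : ℂ) * ((μ (k / e) : ℤ) : ℂ)
          * (((k / e : ℕ) : ℂ) * (Real.log e : ℂ) + (Real.log (Nat.factorial (k / e)) : ℂ))) := by
    have h1 : ∀ j ∈ Finset.Icc 1 k, (Real.log j : ℂ) * ramanujanSum k (j : ℤ)
        = ∑ e ∈ k.divisors,
            (if e ∣ j then (e : ℂ) * ((μ (k / e) : ℤ) : ℂ) * (Real.log j : ℂ) else 0) := by
      intro j hj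
      rw [ramanujanSum_eq k hk (j : ℤ), Finset.mul_sum]
      refine Finset.sum_congr rfl fun e he => ?_
      by_cases h : e ∣ j <;>
        simp [h, Int.natCast_dvd_natCast] <;> ring
    rw [Finset.sum_congr rfl h1, Finset.sum_comm]
    refine Finset.sum_congr rfl fun e he => ?_
    obtain ⟨hdvd, -⟩ := Nat.mem_divisors.mp he
    have he0 : 0 < e := Nat.pos_of_mem_divisors he
    have hmul : e * (k / e) = k := Nat.mul_div_cancel' hdvd
    rw [← Finset.sum_filter]
    have hbij : ∑ j ∈ (Finset.Icc 1 k).filter (fun j => e ∣ j),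
          ((e : ℂ) * ((μ (k / e) : ℤ) : ℂ) * (Real.log j : ℂ))
        = ∑ t ∈ Finset.Icc 1 (k / e),
          ((e : ℂ) * ((μ (k / e) : ℤ) : ℂ) * (Real.log ((e * t : ℕ)) : ℂ)) := by
      refine Finset.sum_nbij' (fun j => j / e) (fun t => e * t) ?_ ?_ ?_ ?_ ?_
      · intro m hm
        simp only [Finset.mem_filter, Finset.mem_Icc] at hm
        obtain ⟨⟨h1, h2⟩, h3⟩ := hm
        simp only [Finset.mem_Icc]
        exact ⟨(Nat.one_le_div_iff he0).mpr (Nat.le_of_dvd h1 h3), Nat.div_le_div_right h2⟩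
      · intro t ht
        simp only [Finset.mem_Icc] at ht
        simp only [Finset.mem_filter, Finset.mem_Icc]
        refine ⟨⟨Nat.mul_pos he0 ht.1, ?_⟩, Dvd.intro t rfl⟩
        calc e * t ≤ e * (k / e) := Nat.mul_le_mul_left e ht.2
          _ = k := hmul
      · intro m hm
        simp only [Finset.mem_filter] at hm
        exact Nat.mul_div_cancel' hm.2
      · intro t ht
        exact Nat.mul_div_cancel_left t he0
      · intro m hm
        simp only [Finset.mem_filter] at hm
        rw [Nat.mul_div_cancel' hm.2]
    rw [hbij, ← Finset.mul_sum]
    congr 1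
    have := sum_log_mul e (k / e) he0
    calc ∑ t ∈ Finset.Icc 1 (k / e), (Real.log ((e * t : ℕ)) : ℂ)
        = ((∑ t ∈ Finset.Icc 1 (k / e), Real.log ((e * t : ℕ)) : ℝ) : ℂ) := by push_cast; rfl
      _ = _ := by rw [this]; push_cast; ring
  rw [hstep1, Finset.mul_sum]
  have hstep2 : ∀ e ∈ k.divisors,
      (1 / (k : ℂ)) * ((e : ℂ) * ((μ (k / e) : ℤ) : ℂ)
          * (((k / e : ℕ) : ℂ) * (Real.log e : ℂ) + (Real.log (Nat.factorial (k / e)) : ℂ)))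
        = ((μ (k / e) : ℤ) : ℂ) * (Real.log e : ℂ)
          + (fun (d : ℕ) => (1 / (d : ℂ)) * ((μ d : ℤ) : ℂ) * (Real.log (Nat.factorial d) : ℂ)) (k / e) := by
    intro e he
    obtain ⟨hdvd, -⟩ := Nat.mem_divisors.mp he
    have he0 : 0 < e := Nat.pos_of_mem_divisors he
    have hq0 : 0 < k / e := Nat.div_pos (Nat.le_of_dvd hk hdvd) he0
    have hmul : (e : ℂ) * ((k / e : ℕ) : ℂ) = (k : ℂ) := by
      exact_mod_cast congrArg (Nat.cast : ℕ → ℂ) (Nat.mul_div_cancel' hdvd)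
    have he0' : (e : ℂ) ≠ 0 := Nat.cast_ne_zero.mpr he0.ne'
    have hq0' : ((k / e : ℕ) : ℂ) ≠ 0 := Nat.cast_ne_zero.mpr hq0.ne'
    have hk0' : (k : ℂ) ≠ 0 := Nat.cast_ne_zero.mpr hk.ne'
    have key : ∀ M A B : ℂ, (1 / ((e : ℂ) * ((k / e : ℕ) : ℂ)))
          * ((e : ℂ) * M * (((k / e : ℕ) : ℂ) * A + B))
        = M * A + (1 / ((k / e : ℕ) : ℂ)) * M * B := by
      intro M A B
      field_simp
    simp only
    rw [← hmul]
    exact key _ _ _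
  rw [Finset.sum_congr rfl hstep2, Finset.sum_add_distrib]
  congr 1
  · have := sum_mu_log k hk
    calc ∑ e ∈ k.divisors, ((μ (k / e) : ℤ) : ℂ) * (Real.log e : ℂ)
        = ((∑ e ∈ k.divisors, ((μ (k / e) : ℤ) : ℝ) * Real.log e : ℝ) : ℂ) := by push_cast; rfl
      _ = _ := by rw [this]
  · rw [Nat.sum_div_divisors k
      (fun d => (1 / (d : ℂ)) * ((μ d : ℤ) : ℂ) * (Real.log (Nat.factorial d) : ℂ))]
    exact Finset.sum_congr rfl fun d hd => by ring
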